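/- arXiv:0710.0403 — 4 statements merged into one kernel-verified Lean document; each statement's English description precedes it below -/
import Mathlib

section
/- For a linear map L with singular values 0 ≤ s₁ ≤ ... ≤ s_n and integers 1 ≤ j ≤ k ≤ l ≤ n, the expansion/contraction inequality holds: ‖Λ^j L‖^((l-k)/(l-j)) · ‖Λ^l L‖^((k-j)/(l-j)) ≤ ‖Λ^k L‖ (when j < l). Equivalently, (s_{n-j+1}⋯s_n)^(l-k) · (s_{n-l+1}⋯s_n)^(k-j) ≤ (s_{n-k+1}⋯s_n)^(l-j). -/
/-- expansion/contraction inequality for the dilations of a linear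
map with singular values `0 ≤ s₁ ≤ ... ≤ s_n`: for `1 ≤ j ≤ k ≤ l ≤ n`, `j < l`,
`‖Λ^j L‖^((l-k)/(l-j)) · ‖Λ^l L‖^((k-j)/(l-j)) ≤ ‖Λ^k L‖`, where the
`m`-dilation `‖Λ^m L‖` is the product of the `m` largest singular values
`s_{n-m+1} ⋯ s_n`. -/
theorem area_expanding_stmt1 (n j k l : ℕ) (s : ℕ → ℝ)
    (hs0 : ∀ i, 1 ≤ i → i ≤ n → 0 ≤ s i)
    (hmono : ∀ i, 1 ≤ i → i < n → s i ≤ s (i + 1))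
    (hj : 1 ≤ j) (hjk : j ≤ k) (hkl : k ≤ l) (hln : l ≤ n) (hjl : j < l) :
    (∏ i ∈ Finset.Icc (n - j + 1) n, s i) ^ (((l : ℝ) - k) / ((l : ℝ) - j)) *
      (∏ i ∈ Finset.Icc (n - l + 1) n, s i) ^ (((k : ℝ) - j) / ((l : ℝ) - j)) ≤
      ∏ i ∈ Finset.Icc (n - k + 1) n, s i := by
  -- general monotonicity
  have smono : ∀ q, q ≤ n → ∀ p, 1 ≤ p → p ≤ q → s p ≤ s q := by
    intro q
    induction q with
    | zero => intro _ p hp hpq; omega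
    | succ m ih =>
      intro hqn p hp hpq
      rcases Nat.lt_or_ge p (m + 1) with h | h
      · calc s p ≤ s m := ih (by omega) p hp (by omega)
          _ ≤ s (m + 1) := hmono m (by omega) (by omega)
      · have : p = m + 1 := by omega
        subst this; exact le_refl _
  -- rewrite Icc as Ioc
  have hIoc : ∀ m : ℕ, 1 ≤ m → m ≤ n →
      Finset.Icc (n - m + 1) n = Finset.Ioc (n - m) n := by
    intro m _ _; exact Finset.Icc_add_one_left_eq_Ioc _ _
  rw [hIoc j hj (by omega), hIoc k (by omega) (by omega), hIoc l (by omega) hln]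
  set a := ∏ i ∈ Finset.Ioc (n - l) (n - k), s i with ha_def
  set b := ∏ i ∈ Finset.Ioc (n - k) (n - j), s i with hb_def
  set c := ∏ i ∈ Finset.Ioc (n - j) n, s i with hc_def
  have hmem_nonneg : ∀ (u v : ℕ), v ≤ n → ∀ i ∈ Finset.Ioc u v, 0 ≤ s i := by
    intro u v hv i hi
    rw [Finset.mem_Ioc] at hi
    exact hs0 i (by omega) (by omega)
  have hann : 0 ≤ a := Finset.prod_nonneg (hmem_nonneg _ _ (by omega))
  have hbnn : 0 ≤ b := Finset.prod_nonneg (hmem_nonneg _ _ (by omega))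
  have hcnn : 0 ≤ c := Finset.prod_nonneg (hmem_nonneg _ _ (by omega))
  -- split products
  have hpk : ∏ i ∈ Finset.Ioc (n - k) n, s i = b * c := by
    rw [← Finset.prod_Ioc_consecutive _ (by omega : n - k ≤ n - j) (by omega : n - j ≤ n)]
  have hpl : ∏ i ∈ Finset.Ioc (n - l) n, s i = a * (b * c) := by
    rw [← Finset.prod_Ioc_consecutive _ (by omega : n - l ≤ n - k) (by omega : n - k ≤ n),
      ← Finset.prod_Ioc_consecutive _ (by omega : n - k ≤ n - j) (by omega : n - j ≤ n)]
  rw [hpk, hpl]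
  -- pivot value
  set M := s (n - k + 1) with hM_def
  have hMnn : 0 ≤ M := hs0 _ (by omega) (by omega)
  have hcard_a : (Finset.Ioc (n - l) (n - k)).card = l - k := by
    rw [Nat.card_Ioc]; omega
  have hcard_b : (Finset.Ioc (n - k) (n - j)).card = k - j := by
    rw [Nat.card_Ioc]; omega
  have haM : a ≤ M ^ (l - k) := by
    rw [← hcard_a, ← Finset.prod_const]
    apply Finset.prod_le_prod (hmem_nonneg _ _ (by omega))
    intro i hi
    rw [Finset.mem_Ioc] at hi
    rcases Nat.lt_or_ge i (n - k + 1) with h | h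
    · calc s i ≤ s (n - k) := smono (n - k) (by omega) i (by omega) (by omega)
        _ ≤ s (n - k + 1) := hmono _ (by omega) (by omega)
    · have : i = n - k + 1 := by omega
      rw [this]
  have hMb : M ^ (k - j) ≤ b := by
    rw [← hcard_b, ← Finset.prod_const]
    apply Finset.prod_le_prod (fun i _ => hMnn)
    intro i hi
    rw [Finset.mem_Ioc] at hi
    exact smono i (by omega) (n - k + 1) (by omega) (by omega)
  -- key natural-power inequality
  have hakey : a ^ (k - j) ≤ b ^ (l - k) := by
    calc a ^ (k - j) ≤ (M ^ (l - k)) ^ (k - j) := pow_le_pow_left₀ hann haM _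
      _ = (M ^ (k - j)) ^ (l - k) := by rw [← pow_mul, ← pow_mul, Nat.mul_comm]
      _ ≤ b ^ (l - k) := pow_le_pow_left₀ (pow_nonneg hMnn _) hMb _
  set e1 := l - k with he1
  set e2 := k - j with he2
  have hsum : e1 + e2 = l - j := by omega
  have key : c ^ e1 * (a * (b * c)) ^ e2 ≤ (b * c) ^ (e1 + e2) := by
    have h1 : c ^ e1 * (a * (b * c)) ^ e2 = (a ^ e2 * b ^ e2) * c ^ (e1 + e2) := by
      rw [mul_pow, mul_pow, pow_add]; ring
    have h2 : (b * c) ^ (e1 + e2) = (b ^ e1 * b ^ e2) * c ^ (e1 + e2) := by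
      rw [mul_pow, pow_add]
    rw [h1, h2]
    exact mul_le_mul_of_nonneg_right
      (mul_le_mul_of_nonneg_right hakey (pow_nonneg hbnn _)) (pow_nonneg hcnn _)
  -- pass to real powers
  set d := (l : ℝ) - (j : ℝ) with hd_def
  have hd : (0 : ℝ) < d := by
    have : (j : ℝ) < (l : ℝ) := Nat.cast_lt.mpr hjl
    rw [hd_def]; linarith
  have he1c : ((e1 : ℕ) : ℝ) = (l : ℝ) - (k : ℝ) := by
    rw [he1, Nat.cast_sub hkl]
  have he2c : ((e2 : ℕ) : ℝ) = (k : ℝ) - (j : ℝ) := by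
    rw [he2, Nat.cast_sub hjk]
  have hsumc : ((e1 + e2 : ℕ) : ℝ) = d := by
    push_cast [hsum, Nat.cast_sub (by omega : j ≤ l)]
    rw [hd_def]
  have hpl_nn : 0 ≤ a * (b * c) := by positivity
  have hX : c ^ (((l : ℝ) - k) / d) = (c ^ e1) ^ d⁻¹ := by
    rw [← Real.rpow_natCast c e1, ← Real.rpow_mul hcnn, he1c, div_eq_mul_inv]
  have hY : (a * (b * c)) ^ (((k : ℝ) - j) / d) = ((a * (b * c)) ^ e2) ^ d⁻¹ := by
    rw [← Real.rpow_natCast (a * (b * c)) e2, ← Real.rpow_mul hpl_nn, he2c, div_eq_mul_inv]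
  have hZ : ((b * c) ^ (e1 + e2)) ^ d⁻¹ = b * c := by
    rw [← Real.rpow_natCast (b * c) (e1 + e2), ← Real.rpow_mul (by positivity), hsumc,
      mul_inv_cancel₀ (ne_of_gt hd), Real.rpow_one]
  rw [hX, hY, ← Real.mul_rpow (pow_nonneg hcnn _) (pow_nonneg hpl_nn _)]
  calc (c ^ e1 * (a * (b * c)) ^ e2) ^ d⁻¹
      ≤ ((b * c) ^ (e1 + e2)) ^ d⁻¹ :=
        Real.rpow_le_rpow (by positivity) key (by positivity)
    _ = b * c := hZ
end

section
/- Let s₁ ≤ s₂ ≤ ... ≤ s_n be nonnegative real numbers and let 1 ≤ j ≤ k ≤ l ≤ n be integers with j < l. Then (∏_{i=n-j+1}^{n} s_i)^(l-k) · (∏_{i=n-l+1}^{n} s_i)^(k-j) ≤ (∏_{i=n-k+1}^{n} s_i)^(l-j). -/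
/-- for nonnegative nondecreasing reals `s₁ ≤ ... ≤ s_n` and
`1 ≤ j ≤ k ≤ l ≤ n` with `j < l`:
`(∏ top j)^(l-k) · (∏ top l)^(k-j) ≤ (∏ top k)^(l-j)`. -/
theorem area_expanding_stmt2 (n j k l : ℕ) (s : ℕ → ℝ)
    (hs0 : ∀ i, 1 ≤ i → i ≤ n → 0 ≤ s i)
    (hmono : ∀ i, 1 ≤ i → i < n → s i ≤ s (i + 1))
    (hj : 1 ≤ j) (hjk : j ≤ k) (hkl : k ≤ l) (hln : l ≤ n) (hjl : j < l) :
    (∏ i ∈ Finset.Icc (n - j + 1) n, s i) ^ (l - k) *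
      (∏ i ∈ Finset.Icc (n - l + 1) n, s i) ^ (k - j) ≤
      (∏ i ∈ Finset.Icc (n - k + 1) n, s i) ^ (l - j) := by
  have hmono' : ∀ a b : ℕ, 1 ≤ a → a ≤ b → b ≤ n → s a ≤ s b := by
    intro a b ha hab
    induction b with
    | zero => omega
    | succ m ih =>
      intro hbn
      rcases Nat.eq_or_lt_of_le hab with h | h
      · exact le_of_eq (by rw [h])
      · have ham : a ≤ m := Nat.lt_succ_iff.mp h
        have hmn : m < n := Nat.lt_of_succ_le hbn
        exact le_trans (ih ham hmn.le) (hmono m (le_trans ha ham) hmn)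
  rw [Finset.Icc_add_one_left_eq_Ioc, Finset.Icc_add_one_left_eq_Ioc, Finset.Icc_add_one_left_eq_Ioc]
  have hc0 : (0:ℝ) ≤ s (n - k + 1) := hs0 _ (by omega) (by omega)
  have hPj0 : (0:ℝ) ≤ ∏ i ∈ Finset.Ioc (n - j) n, s i :=
    Finset.prod_nonneg fun i hi => by
      simp only [Finset.mem_Ioc] at hi; exact hs0 i (by omega) hi.2
  have hB0 : (0:ℝ) ≤ ∏ i ∈ Finset.Ioc (n - k) (n - j), s i :=
    Finset.prod_nonneg fun i hi => by
      simp only [Finset.mem_Ioc] at hi; exact hs0 i (by omega) (by omega)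
  have hA0 : (0:ℝ) ≤ ∏ i ∈ Finset.Ioc (n - l) (n - k), s i :=
    Finset.prod_nonneg fun i hi => by
      simp only [Finset.mem_Ioc] at hi; exact hs0 i (by omega) (by omega)
  have hA : (∏ i ∈ Finset.Ioc (n - l) (n - k), s i) ≤ s (n - k + 1) ^ (l - k) := by
    calc (∏ i ∈ Finset.Ioc (n - l) (n - k), s i)
        ≤ ∏ _i ∈ Finset.Ioc (n - l) (n - k), s (n - k + 1) := by
          refine Finset.prod_le_prod (fun i hi => ?_) (fun i hi => ?_)
          · simp only [Finset.mem_Ioc] at hi; exact hs0 i (by omega) (by omega)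
          · simp only [Finset.mem_Ioc] at hi
            exact hmono' i (n - k + 1) (by omega) (by omega) (by omega)
      _ = s (n - k + 1) ^ (l - k) := by
          rw [Finset.prod_const, Nat.card_Ioc, show n - k - (n - l) = l - k by omega]
  have hB : s (n - k + 1) ^ (k - j) ≤ ∏ i ∈ Finset.Ioc (n - k) (n - j), s i := by
    calc s (n - k + 1) ^ (k - j)
        = ∏ _i ∈ Finset.Ioc (n - k) (n - j), s (n - k + 1) := by
          rw [Finset.prod_const, Nat.card_Ioc, show n - j - (n - k) = k - j by omega]
      _ ≤ ∏ i ∈ Finset.Ioc (n - k) (n - j), s i := by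
          refine Finset.prod_le_prod (fun _ _ => hc0) (fun i hi => ?_)
          simp only [Finset.mem_Ioc] at hi
          exact hmono' (n - k + 1) i (by omega) (by omega) (by omega)
  have splitl : (∏ i ∈ Finset.Ioc (n - l) n, s i) =
      (∏ i ∈ Finset.Ioc (n - l) (n - k), s i) * ∏ i ∈ Finset.Ioc (n - k) n, s i :=
    (Finset.prod_Ioc_consecutive _ (by omega) (by omega)).symm
  have splitk : (∏ i ∈ Finset.Ioc (n - k) n, s i) =
      (∏ i ∈ Finset.Ioc (n - k) (n - j), s i) * ∏ i ∈ Finset.Ioc (n - j) n, s i :=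
    (Finset.prod_Ioc_consecutive _ (by omega) (by omega)).symm
  rw [splitl, splitk]
  set A := ∏ i ∈ Finset.Ioc (n - l) (n - k), s i
  set B := ∏ i ∈ Finset.Ioc (n - k) (n - j), s i
  set Pj := ∏ i ∈ Finset.Ioc (n - j) n, s i
  have h1 : A ^ (k - j) ≤ B ^ (l - k) :=
    calc A ^ (k - j) ≤ (s (n - k + 1) ^ (l - k)) ^ (k - j) := pow_le_pow_left₀ hA0 hA _
      _ = (s (n - k + 1) ^ (k - j)) ^ (l - k) := by rw [← pow_mul, ← pow_mul, Nat.mul_comm]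
      _ ≤ B ^ (l - k) := pow_le_pow_left₀ (pow_nonneg hc0 _) hB _
  calc Pj ^ (l - k) * (A * (B * Pj)) ^ (k - j)
      = A ^ (k - j) * (Pj ^ (l - k) * (B * Pj) ^ (k - j)) := by ring
    _ ≤ B ^ (l - k) * (Pj ^ (l - k) * (B * Pj) ^ (k - j)) :=
        mul_le_mul_of_nonneg_right h1
          (mul_nonneg (pow_nonneg hPj0 _) (pow_nonneg (mul_nonneg hB0 hPj0) _))
    _ = (B * Pj) ^ (l - k) * (B * Pj) ^ (k - j) := by ring
    _ = (B * Pj) ^ (l - j) := by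
        rw [← pow_add, show l - k + (k - j) = l - j by omega]
end

section
/- Let R₁ ≤ ... ≤ R_n and S₁ ≤ ... ≤ S_n be positive reals and 0 ≤ j < k-1 < k ≤ n. Suppose ((R₁⋯R_j)/(S₁⋯S_j))^(1/(k-j)) ≤ ((R₁⋯R_{j+1})/(S₁⋯S_{j+1}))^(1/(k-j-1)). Then S₁⋯S_j · S_{j+1}^(k-j) ≤ R₁⋯R_j · R_{j+1}^(k-j); consequently, if L is defined by R₁⋯R_j · L^(k-j) = S₁⋯S_j · S_j^(k-j), then L ≤ R_{j+1}. -/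
/-- with `R₁ ≤ ... ≤ R_n`, `S₁ ≤ ... ≤ S_n` positive and
`0 ≤ j < k - 1 < k ≤ n`, if
`((R₁⋯R_j)/(S₁⋯S_j))^(1/(k-j)) ≤ ((R₁⋯R_{j+1})/(S₁⋯S_{j+1}))^(1/(k-j-1))`,
then `S₁⋯S_j · S_{j+1}^(k-j) ≤ R₁⋯R_j · R_{j+1}^(k-j)`; consequently if `L > 0`
satisfies `R₁⋯R_j · L^(k-j) = S₁⋯S_j · S_j^(k-j)` then `L ≤ R_{j+1}`. -/
theorem area_expanding_stmt5 (n j k : ℕ) (R S : ℕ → ℝ) (L : ℝ)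
    (hR : ∀ i, i ≤ n → 0 < R i) (hS : ∀ i, i ≤ n → 0 < S i)
    (hRm : ∀ i, i < n → R i ≤ R (i + 1))
    (hSm : ∀ i, i < n → S i ≤ S (i + 1))
    (hjk : j < k - 1) (hk : 1 < k) (hkn : k ≤ n)
    (hL : 0 < L)
    (hLdef : (∏ i ∈ Finset.Icc 1 j, R i) * L ^ (k - j) =
      (∏ i ∈ Finset.Icc 1 j, S i) * (S j) ^ (k - j))
    (hmin : ((∏ i ∈ Finset.Icc 1 j, R i) / (∏ i ∈ Finset.Icc 1 j, S i)) ^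
        ((1 : ℝ) / ((k : ℝ) - j)) ≤
      ((∏ i ∈ Finset.Icc 1 (j + 1), R i) / (∏ i ∈ Finset.Icc 1 (j + 1), S i)) ^
        ((1 : ℝ) / ((k : ℝ) - j - 1))) :
    (∏ i ∈ Finset.Icc 1 j, S i) * (S (j + 1)) ^ (k - j) ≤
      (∏ i ∈ Finset.Icc 1 j, R i) * (R (j + 1)) ^ (k - j) ∧
    L ≤ R (j + 1) := by
  have hjn : j ≤ n := by omega
  have hj1n : j + 1 ≤ n := by omega
  set PR := ∏ i ∈ Finset.Icc 1 j, R i with hPRdef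
  set PS := ∏ i ∈ Finset.Icc 1 j, S i with hPSdef
  have hPR : 0 < PR :=
    Finset.prod_pos fun i hi => hR i (le_trans (Finset.mem_Icc.mp hi).2 hjn)
  have hPS : 0 < PS :=
    Finset.prod_pos fun i hi => hS i (le_trans (Finset.mem_Icc.mp hi).2 hjn)
  have hr : 0 < R (j + 1) := hR _ hj1n
  have hs : 0 < S (j + 1) := hS _ hj1n
  have hprodR : ∏ i ∈ Finset.Icc 1 (j + 1), R i = PR * R (j + 1) :=
    Finset.prod_Icc_succ_top (Nat.succ_le_succ (Nat.zero_le j)) R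
  have hprodS : ∏ i ∈ Finset.Icc 1 (j + 1), S i = PS * S (j + 1) :=
    Finset.prod_Icc_succ_top (Nat.succ_le_succ (Nat.zero_le j)) S
  rw [hprodR, hprodS] at hmin
  set m := k - j with hm
  have hm2 : 2 ≤ m := by omega
  set d : ℝ := (k : ℝ) - j with hd
  set e : ℝ := (k : ℝ) - j - 1 with he
  have hjkR : (j : ℝ) + 1 < k := by exact_mod_cast (show j + 1 < k by omega)
  have hd0 : 0 < d := by rw [hd]; linarith
  have he0 : 0 < e := by rw [he]; linarith
  have hx : (0:ℝ) < PR / PS := div_pos hPR hPS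
  have hy : (0:ℝ) < PR * R (j + 1) / (PS * S (j + 1)) := by positivity
  have h1 : ((PR / PS) ^ ((1:ℝ)/d)) ^ e ≤
      ((PR * R (j + 1) / (PS * S (j + 1))) ^ ((1:ℝ)/e)) ^ e :=
    Real.rpow_le_rpow (Real.rpow_nonneg hx.le _) hmin he0.le
  rw [← Real.rpow_mul hx.le, ← Real.rpow_mul hy.le, one_div_mul_cancel he0.ne',
    Real.rpow_one] at h1
  have h2 : ((PR / PS) ^ ((1:ℝ)/d * e)) ^ d ≤
      (PR * R (j + 1) / (PS * S (j + 1))) ^ d :=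
    Real.rpow_le_rpow (Real.rpow_nonneg hx.le _) h1 hd0.le
  rw [← Real.rpow_mul hx.le] at h2
  have hmul : (1:ℝ)/d * e * d = e := by field_simp
  rw [hmul] at h2
  have hde : d = (m : ℝ) := by
    rw [hd, hm, Nat.cast_sub (show j ≤ k by omega)]
  have hee : e = ((m - 1 : ℕ) : ℝ) := by
    rw [he, Nat.cast_sub (show 1 ≤ m by omega), ← hde, hd]
    push_cast
    ring
  rw [hde, hee, Real.rpow_natCast, Real.rpow_natCast] at h2
  -- h2 : (PR / PS) ^ (m - 1) ≤ (PR * R (j+1) / (PS * S (j+1))) ^ m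
  rw [div_pow, div_pow, div_le_div_iff₀ (by positivity) (by positivity)] at h2
  -- h2 : PR ^ (m-1) * (PS * S (j+1)) ^ m ≤ (PR * R (j+1)) ^ m * PS ^ (m-1)
  have hPRm : PR ^ m = PR ^ (m - 1) * PR := by
    rw [← pow_succ]; congr 1; omega
  have hPSm : PS ^ m = PS ^ (m - 1) * PS := by
    rw [← pow_succ]; congr 1; omega
  rw [mul_pow, mul_pow, hPRm, hPSm] at h2
  have hC : (0:ℝ) < PR ^ (m - 1) * PS ^ (m - 1) := by positivity
  have part1 : PS * S (j + 1) ^ m ≤ PR * R (j + 1) ^ m := by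
    rw [← mul_le_mul_iff_of_pos_left hC]
    calc PR ^ (m - 1) * PS ^ (m - 1) * (PS * S (j + 1) ^ m)
        = PR ^ (m - 1) * (PS ^ (m - 1) * PS * S (j + 1) ^ m) := by ring
      _ ≤ PR ^ (m - 1) * PR * R (j + 1) ^ m * PS ^ (m - 1) := h2
      _ = PR ^ (m - 1) * PS ^ (m - 1) * (PR * R (j + 1) ^ m) := by ring
  refine ⟨part1, ?_⟩
  have hSj : S j ≤ S (j + 1) := hSm j (by omega)
  have hSj0 : 0 < S j := hS j hjn
  have hchain : PR * L ^ m ≤ PR * R (j + 1) ^ m := by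
    rw [hLdef]
    calc PS * S j ^ m ≤ PS * S (j + 1) ^ m := by
          apply mul_le_mul_of_nonneg_left _ hPS.le
          exact pow_le_pow_left₀ hSj0.le hSj m
      _ ≤ PR * R (j + 1) ^ m := part1
  have hLm : L ^ m ≤ R (j + 1) ^ m := le_of_mul_le_mul_left hchain hPR
  exact le_of_pow_le_pow_left₀ (by omega) hr.le hLm
end

section
/- Let R₁ ≤ ... ≤ R_n and S₁ ≤ ... ≤ S_n be positive reals and 1 ≤ k ≤ n. Suppose for all integers 0 ≤ j < k ≤ l ≤ n: R₁⋯R_j·(R_{j+1}⋯R_l)^((k-j)/(l-j)) ≥ S₁⋯S_j·(S_{j+1}⋯S_l)^((k-j)/(l-j)). Then there exists a k-contracting linear diffeomorphism from the rectangle with sides R_i to a rectangle with sides T₁,...,T_n satisfying T₁⋯T_p ≥ S₁⋯S_p for all 1 ≤ p ≤ n. A diagonal linear map with diagonal entries λ_i = T_i/R_i is k-contracting if and only if the product of the k largest λ_i is at most 1. -/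
open Finset

noncomputable def slopeFn (X : ℕ → ℝ) (j l : ℕ) : ℝ := (X l - X j) / ((l : ℝ) - (j : ℝ))

noncomputable def MFn (n : ℕ) (X : ℕ → ℝ) (j i : ℕ) : ℝ :=
  (Icc (min i n) n).sup' ⟨n, by simp [Finset.mem_Icc]⟩ (slopeFn X j)

noncomputable def xFn (n : ℕ) (X : ℕ → ℝ) (i : ℕ) : ℝ :=
  (Icc 0 (i - 1)).inf' ⟨0, by simp⟩ (fun j => MFn n X j i)

lemma xFn_le (n : ℕ) (X : ℕ → ℝ) (i j : ℕ) (hj : j ∈ Icc 0 (i - 1)) :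
    xFn n X i ≤ MFn n X j i :=
  Finset.inf'_le _ hj

lemma exists_xFn_eq (n : ℕ) (X : ℕ → ℝ) (i : ℕ) :
    ∃ j ∈ Icc 0 (i - 1), xFn n X i = MFn n X j i :=
  Finset.exists_mem_eq_inf' _ _

lemma MFn_anti (n : ℕ) (X : ℕ → ℝ) (j i : ℕ) (h1 : i + 1 ≤ n) :
    MFn n X j (i + 1) ≤ MFn n X j i := by
  apply Finset.sup'_le
  intro l hl
  apply Finset.le_sup'
  simp only [Finset.mem_Icc] at hl ⊢
  omega

lemma xFn_adj (n : ℕ) (X : ℕ → ℝ) (i : ℕ) (h0 : 1 ≤ i) (h1 : i + 1 ≤ n) :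
    xFn n X (i + 1) ≤ xFn n X i := by
  obtain ⟨j0, hj0mem, hj0⟩ := exists_xFn_eq n X i
  rw [hj0]
  have hj0mem' : j0 ∈ Icc 0 (i + 1 - 1) := by
    simp only [Finset.mem_Icc] at hj0mem ⊢; omega
  exact le_trans (xFn_le n X (i+1) j0 hj0mem') (MFn_anti n X j0 i h1)

lemma xFn_anti (n : ℕ) (X : ℕ → ℝ) (a b : ℕ) (ha : 1 ≤ a) (hab : a ≤ b) (hbn : b ≤ n) :
    xFn n X b ≤ xFn n X a := by
  induction b, hab using Nat.le_induction with
  | base => exact le_refl _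
  | succ m hm ih =>
      have hmn : m ≤ n := by omega
      exact le_trans (xFn_adj n X m (le_trans ha hm) hbn) (ih hmn)

noncomputable def VFn (n : ℕ) (hn : 0 < n) (X : ℕ → ℝ) (p : ℕ) : ℝ :=
  (((Icc 0 p) ×ˢ (Icc (min p n) n)).filter fun q => q.1 < q.2).sup'
    ⟨(0, n), by simp [Finset.mem_filter, Finset.mem_product, Finset.mem_Icc, hn]⟩
    fun q => X q.1 + ((p : ℝ) - (q.1 : ℝ)) * slopeFn X q.1 q.2

lemma le_MFn (n : ℕ) (X : ℕ → ℝ) (j i l : ℕ) (hl : l ∈ Icc (min i n) n) :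
    slopeFn X j l ≤ MFn n X j i :=
  Finset.le_sup' _ hl

lemma exists_MFn_eq (n : ℕ) (X : ℕ → ℝ) (j i : ℕ) :
    ∃ l ∈ Icc (min i n) n, MFn n X j i = slopeFn X j l :=
  Finset.exists_mem_eq_sup' _ _

lemma xFn_prefix (n : ℕ) (X : ℕ → ℝ) (hX0 : X 0 = 0) :
    ∀ p, p ≤ n → X p ≤ ∑ i ∈ Ioc 0 p, xFn n X i := by
  intro p
  induction p using Nat.strong_induction_on with
  | _ p ih =>
    intro hpn
    rcases Nat.eq_zero_or_pos p with h0 | hp1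
    · subst h0; simp [hX0]
    · obtain ⟨j0, hj0mem, hj0⟩ := exists_xFn_eq n X p
      simp only [Finset.mem_Icc] at hj0mem
      have hj0p : j0 < p := by omega
      -- x p ≥ slope j0 p
      have hslope : slopeFn X j0 p ≤ xFn n X p := by
        rw [hj0]
        apply le_MFn
        simp only [Finset.mem_Icc]
        omega
      have hdpos : (0:ℝ) < (p : ℝ) - (j0 : ℝ) := by
        have : (j0:ℝ) < (p:ℝ) := by exact_mod_cast hj0p
        linarith
      have hkey : X p - X j0 ≤ ((p:ℝ) - (j0:ℝ)) * xFn n X p := by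
        rw [slopeFn, div_le_iff₀ hdpos] at hslope
        linarith [hslope]
      -- sum over Ioc j0 p
      have hsum2 : ((p:ℝ) - (j0:ℝ)) * xFn n X p ≤ ∑ i ∈ Ioc j0 p, xFn n X i := by
        have hcard : (Ioc j0 p).card = p - j0 := Nat.card_Ioc j0 p
        have : ∀ i ∈ Ioc j0 p, xFn n X p ≤ xFn n X i := by
          intro i hi
          simp only [Finset.mem_Ioc] at hi
          exact xFn_anti n X i p (by omega) hi.2 hpn
        calc ((p:ℝ) - (j0:ℝ)) * xFn n X p
            = (Ioc j0 p).card * xFn n X p := by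
              rw [hcard]; congr 1
              have : (j0:ℝ) ≤ (p:ℝ) := by exact_mod_cast hj0p.le
              push_cast [Nat.cast_sub hj0p.le]; ring
          _ = ∑ _i ∈ Ioc j0 p, xFn n X p := by
              rw [Finset.sum_const, nsmul_eq_mul]
          _ ≤ ∑ i ∈ Ioc j0 p, xFn n X i := Finset.sum_le_sum this
      have hIH := ih j0 hj0p (by omega)
      have hsplit : ∑ i ∈ Ioc 0 j0, xFn n X i + ∑ i ∈ Ioc j0 p, xFn n X i
          = ∑ i ∈ Ioc 0 p, xFn n X i :=
        Finset.sum_Ioc_consecutive _ (Nat.zero_le j0) hj0p.le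
      linarith

lemma le_VFn (n : ℕ) (hn : 0 < n) (X : ℕ → ℝ) (p j l : ℕ)
    (hj : j ≤ p) (hl1 : min p n ≤ l) (hl2 : l ≤ n) (hjl : j < l) :
    X j + ((p : ℝ) - (j : ℝ)) * slopeFn X j l ≤ VFn n hn X p := by
  have hmem : (j, l) ∈ ((Icc 0 p) ×ˢ (Icc (min p n) n)).filter (fun q : ℕ × ℕ => q.1 < q.2) := by
    simp [Finset.mem_filter, Finset.mem_product, Finset.mem_Icc, hj, hl1, hl2, hjl]
  have h := Finset.le_sup' (fun q : ℕ × ℕ => X q.1 + ((p : ℝ) - (q.1 : ℝ)) * slopeFn X q.1 q.2) hmem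
  rw [VFn]
  exact h

lemma exists_VFn_eq (n : ℕ) (hn : 0 < n) (X : ℕ → ℝ) (p : ℕ) :
    ∃ q ∈ ((Icc 0 p) ×ˢ (Icc (min p n) n)).filter fun q : ℕ × ℕ => q.1 < q.2,
      VFn n hn X p = X q.1 + ((p : ℝ) - (q.1 : ℝ)) * slopeFn X q.1 q.2 :=
  Finset.exists_mem_eq_sup' _ _

lemma VFn_zero_ge (n : ℕ) (hn : 0 < n) (X : ℕ → ℝ) (hX0 : X 0 = 0) :
    0 ≤ VFn n hn X 0 := by
  have h := le_VFn n hn X 0 0 n (le_refl 0) (by omega) (le_refl n) hn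
  rw [hX0] at h
  simpa using h

-- the inductive step: V (p-1) + x p ≤ V p
lemma VFn_step (n : ℕ) (hn : 0 < n) (X : ℕ → ℝ) (p : ℕ) (hp1 : 1 ≤ p) (hpn : p ≤ n) :
    VFn n hn X (p - 1) + xFn n X p ≤ VFn n hn X p := by
  obtain ⟨⟨j1, l1⟩, hmem, heq⟩ := exists_VFn_eq n hn X (p - 1)
  simp only [Finset.mem_filter, Finset.mem_product, Finset.mem_Icc] at hmem
  obtain ⟨⟨⟨-, hj1⟩, hl1min, hl1n⟩, hj1l1⟩ := hmem
  have hminp1 : min (p - 1) n = p - 1 := Nat.min_eq_left (by omega)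
  have hl1p1 : p - 1 ≤ l1 := by omega
  have hcastp1 : ((p - 1 : ℕ) : ℝ) = (p : ℝ) - 1 := by
    push_cast [Nat.cast_sub hp1]; ring
  -- helper for the "V (p-1) = X (p-1)" cases
  have hmain2 : VFn n hn X (p - 1) = X (p - 1) →
      VFn n hn X (p - 1) + xFn n X p ≤ VFn n hn X p := by
    intro hV
    obtain ⟨l', hl'mem, hl'⟩ := exists_MFn_eq n X (p - 1) p
    simp only [Finset.mem_Icc, Nat.min_eq_left hpn] at hl'mem
    have hxle : xFn n X p ≤ slopeFn X (p - 1) l' := by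
      rw [← hl']
      exact xFn_le n X p (p - 1) (by simp)
    have hchord := le_VFn n hn X p (p - 1) l' (by omega)
      (by rw [Nat.min_eq_left hpn]; omega) hl'mem.2 (by omega)
    have hfact : ((p : ℝ) - ((p - 1 : ℕ) : ℝ)) = 1 := by rw [hcastp1]; ring
    rw [hfact, one_mul] at hchord
    rw [hV]
    linarith
  by_cases hcase : j1 = p - 1 ∨ l1 = p - 1
  · -- degenerate: V (p-1) = X (p-1)
    apply hmain2
    rcases hcase with h | h
    · rw [heq, h]; simp
    · -- l1 = p - 1, chord value at right endpoint equals X l1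
      rw [heq, h]
      have hne : ((p - 1 : ℕ) : ℝ) - (j1 : ℝ) ≠ 0 := by
        have : (j1 : ℝ) < ((p - 1 : ℕ) : ℝ) := by exact_mod_cast (h ▸ hj1l1)
        linarith
      have hgen : ∀ (aj al vj vl : ℝ), al - aj ≠ 0 →
          vj + (al - aj) * ((vl - vj) / (al - aj)) = vl := by
        intro aj al vj vl hne'
        field_simp
        ring
      exact hgen _ _ _ _ hne
  · push_neg at hcase
    obtain ⟨hj1ne, hl1ne⟩ := hcase
    have hj1lt : j1 < p - 1 := by omega
    have hl1p : p ≤ l1 := by omega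
    -- x p ≤ M j1 p = slope j1 l'
    obtain ⟨l', hl'mem, hl'⟩ := exists_MFn_eq n X j1 p
    simp only [Finset.mem_Icc, Nat.min_eq_left hpn] at hl'mem
    have hxle : xFn n X p ≤ slopeFn X j1 l' := by
      rw [← hl']
      exact xFn_le n X p j1 (by simp only [Finset.mem_Icc]; omega)
    -- slope j1 l' ≤ slope j1 l1 by optimality of (j1,l1) at p-1
    have hopt := le_VFn n hn X (p - 1) j1 l' (by omega)
      (by rw [hminp1]; omega) hl'mem.2 (by omega)
    rw [heq] at hopt
    have hdpos : (0:ℝ) < ((p - 1 : ℕ) : ℝ) - (j1 : ℝ) := by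
      have : (j1 : ℝ) < ((p - 1 : ℕ) : ℝ) := by exact_mod_cast hj1lt
      linarith
    have hslopele : slopeFn X j1 l' ≤ slopeFn X j1 l1 := by
      have h1 : (((p - 1 : ℕ) : ℝ) - (j1 : ℝ)) * slopeFn X j1 l' ≤
          (((p - 1 : ℕ) : ℝ) - (j1 : ℝ)) * slopeFn X j1 l1 := by
        simp only at hopt
        linarith
      exact (mul_le_mul_iff_right₀ hdpos).mp h1
    -- chord (j1, l1) at p
    have hchord := le_VFn n hn X p j1 l1 (by omega) (by rw [Nat.min_eq_left hpn]; omega)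
      hl1n hj1l1
    simp only at heq
    rw [heq, hcastp1]
    have hexp : ((p : ℝ) - (j1 : ℝ)) * slopeFn X j1 l1
        = ((p : ℝ) - 1 - (j1 : ℝ)) * slopeFn X j1 l1 + slopeFn X j1 l1 := by ring
    linarith [hchord, hslopele, hxle, hexp]

lemma VFn_k_le (n k : ℕ) (hn : 0 < n) (X : ℕ → ℝ) (hk : 1 ≤ k) (hkn : k ≤ n)
    (hc : ∀ j l, j < k → k ≤ l → l ≤ n →
      X j + (((k : ℝ) - (j : ℝ)) / ((l : ℝ) - (j : ℝ))) * (X l - X j) ≤ 0) :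
    VFn n hn X k ≤ 0 := by
  have hXk : X k ≤ 0 := by
    have h := hc (k - 1) k (by omega) (le_refl k) hkn
    have hcast : ((k - 1 : ℕ) : ℝ) = (k : ℝ) - 1 := by
      push_cast [Nat.cast_sub hk]; ring
    rw [hcast] at h
    have hd : (k : ℝ) - ((k : ℝ) - 1) = 1 := by ring
    rw [hd] at h
    simp at h
    linarith
  rw [VFn]
  apply Finset.sup'_le
  rintro ⟨j, l⟩ hq
  simp only [Finset.mem_filter, Finset.mem_product, Finset.mem_Icc, Nat.min_eq_left hkn] at hq
  obtain ⟨⟨⟨-, hjk⟩, hkl, hln⟩, hjl⟩ := hq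
  rcases Nat.lt_or_ge j k with hjlt | hjge
  · have h := hc j l hjlt hkl hln
    have hne : (l : ℝ) - (j : ℝ) ≠ 0 := by
      have : (j : ℝ) < (l : ℝ) := by exact_mod_cast hjl
      linarith
    simp only [slopeFn]
    calc X j + ((k : ℝ) - (j : ℝ)) * ((X l - X j) / ((l : ℝ) - (j : ℝ)))
        = X j + (((k : ℝ) - (j : ℝ)) / ((l : ℝ) - (j : ℝ))) * (X l - X j) := by
          field_simp
      _ ≤ 0 := h
  · have hjeq : j = k := le_antisymm hjk hjge
    subst hjeq
    simp only [sub_self, zero_mul, add_zero]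
    exact hXk

lemma core (n k : ℕ) (X : ℕ → ℝ) (hk : 1 ≤ k) (hkn : k ≤ n) (hX0 : X 0 = 0)
    (hc : ∀ j l, j < k → k ≤ l → l ≤ n →
      X j + (((k : ℝ) - (j : ℝ)) / ((l : ℝ) - (j : ℝ))) * (X l - X j) ≤ 0) :
    (∀ a b, 1 ≤ a → a ≤ b → b ≤ n → xFn n X b ≤ xFn n X a) ∧
    (∀ p, p ≤ n → X p ≤ ∑ i ∈ Ioc 0 p, xFn n X i) ∧
    (∑ i ∈ Ioc 0 k, xFn n X i ≤ 0) := by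
  have hn : 0 < n := lt_of_lt_of_le hk hkn
  refine ⟨fun a b ha hab hbn => xFn_anti n X a b ha hab hbn, xFn_prefix n X hX0, ?_⟩
  have hsum : ∀ p, p ≤ k → ∑ i ∈ Ioc 0 p, xFn n X i ≤ VFn n hn X p := by
    intro p
    induction p with
    | zero => intro _; simpa using VFn_zero_ge n hn X hX0
    | succ m ih =>
        intro hmk
        have hstep := VFn_step n hn X (m + 1) (by omega) (by omega)
        simp only [Nat.add_sub_cancel] at hstep
        have hsplit : ∑ i ∈ Ioc 0 (m + 1), xFn n X i
            = ∑ i ∈ Ioc 0 m, xFn n X i + xFn n X (m + 1) := by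
          rw [← Finset.Icc_add_one_left_eq_Ioc, ← Finset.Icc_add_one_left_eq_Ioc, Finset.sum_Icc_succ_top (by omega)]
        rw [hsplit]
        have := ih (by omega)
        linarith
  calc ∑ i ∈ Ioc 0 k, xFn n X i ≤ VFn n hn X k := hsum k (le_refl k)
    _ ≤ 0 := VFn_k_le n k hn X hk hkn hc
lemma aux_subset_sum (n : ℕ) (x : ℕ → ℝ)
    (hmono : ∀ a b, 1 ≤ a → a ≤ b → b ≤ n → x b ≤ x a) :
    ∀ k : ℕ, ∀ A : Finset ℕ, A ⊆ Icc 1 n → A.card = k →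
      ∑ i ∈ A, x i ≤ ∑ i ∈ Icc 1 k, x i := by
  intro k
  induction k with
  | zero =>
      intro A _ hcard
      rw [Finset.card_eq_zero] at hcard
      subst hcard
      simp
  | succ m ih =>
      intro A hA hcard
      have hne : A.Nonempty := Finset.card_pos.mp (by omega)
      set a := A.max' hne with ha
      have haA : a ∈ A := A.max'_mem hne
      have haIcc := hA haA
      simp only [Finset.mem_Icc] at haIcc
      have hsub : A ⊆ Icc 1 a := by
        intro b hb
        simp only [Finset.mem_Icc]
        exact ⟨(Finset.mem_Icc.mp (hA hb)).1, A.le_max' b hb⟩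
      have hma : m + 1 ≤ a := by
        have := Finset.card_le_card hsub
        rw [Nat.card_Icc] at this
        omega
      have hxa : x a ≤ x (m + 1) := hmono (m + 1) a (by omega) hma haIcc.2
      have herase : A.erase a ⊆ Icc 1 n := fun b hb => hA (Finset.erase_subset _ _ hb)
      have hcard' : (A.erase a).card = m := by
        rw [Finset.card_erase_of_mem haA, hcard]
        omega
      have hih := ih (A.erase a) herase hcard'
      have hsplitA : ∑ i ∈ A, x i = ∑ i ∈ A.erase a, x i + x a :=
        (Finset.sum_erase_add A x haA).symm
      have hsplitI : ∑ i ∈ Icc 1 (m + 1), x i = ∑ i ∈ Icc 1 m, x i + x (m + 1) :=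
        Finset.sum_Icc_succ_top (by omega) x
      rw [hsplitA, hsplitI]
      exact add_le_add hih hxa


/-- Lemma 7.2: if for all `0 ≤ j < k ≤ l ≤ n`
`R₁⋯R_j·(R_{j+1}⋯R_l)^((k-j)/(l-j)) ≥ S₁⋯S_j·(S_{j+1}⋯S_l)^((k-j)/(l-j))`,
then there is a `k`-contracting linear diffeomorphism from the rectangle `R` to
a rectangle `T` with `T₁⋯T_p ≥ S₁⋯S_p` for all `p`.  The diagonal linear map
with entries `λᵢ = Tᵢ/Rᵢ` is `k`-contracting iff the product of the `k`
largest `λᵢ` is at most `1`, i.e. every `k`-element product is at most `1`. -/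
theorem area_expanding_stmt12 (n k : ℕ) (R S : ℕ → ℝ)
    (hR : ∀ i, 1 ≤ i → i ≤ n → 0 < R i) (hS : ∀ i, 1 ≤ i → i ≤ n → 0 < S i)
    (hRm : ∀ i, 1 ≤ i → i < n → R i ≤ R (i + 1))
    (hSm : ∀ i, 1 ≤ i → i < n → S i ≤ S (i + 1))
    (hk : 1 ≤ k) (hkn : k ≤ n)
    (hIn : ∀ j l : ℕ, j < k → k ≤ l → l ≤ n →
      (∏ i ∈ Finset.Icc 1 j, S i) *
          (∏ i ∈ Finset.Icc (j + 1) l, S i) ^ (((k : ℝ) - j) / ((l : ℝ) - j)) ≤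
        (∏ i ∈ Finset.Icc 1 j, R i) *
          (∏ i ∈ Finset.Icc (j + 1) l, R i) ^ (((k : ℝ) - j) / ((l : ℝ) - j))) :
    ∃ T : ℕ → ℝ, (∀ i, 1 ≤ i → i ≤ n → 0 < T i) ∧
      (∀ p, 1 ≤ p → p ≤ n →
        (∏ i ∈ Finset.Icc 1 p, S i) ≤ ∏ i ∈ Finset.Icc 1 p, T i) ∧
      (∀ A : Finset ℕ, A ⊆ Finset.Icc 1 n → A.card = k →
        ∏ i ∈ A, (T i / R i) ≤ 1) := by
  classical
  set d : ℕ → ℝ := fun i => Real.log (S i) - Real.log (R i) with hd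
  set X : ℕ → ℝ := fun p => ∑ i ∈ Icc 1 p, d i with hX
  have hX0 : X 0 = 0 := by simp [hX]
  -- basic positivity of partial products
  have hprodSpos : ∀ a b : ℕ, 1 ≤ a → b ≤ n → (0:ℝ) < ∏ i ∈ Icc a b, S i := by
    intro a b ha hb
    apply Finset.prod_pos
    intro i hi
    simp only [Finset.mem_Icc] at hi
    exact hS i (le_trans ha hi.1) (le_trans hi.2 hb)
  have hprodRpos : ∀ a b : ℕ, 1 ≤ a → b ≤ n → (0:ℝ) < ∏ i ∈ Icc a b, R i := by
    intro a b ha hb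
    apply Finset.prod_pos
    intro i hi
    simp only [Finset.mem_Icc] at hi
    exact hR i (le_trans ha hi.1) (le_trans hi.2 hb)
  -- X as difference of log-sums; X l - X j = sum over Ioc j l
  have hXdiff : ∀ j l : ℕ, j ≤ l → X l - X j = ∑ i ∈ Icc (j+1) l, d i := by
    intro j l hjl
    have h1 : ∑ i ∈ Ioc 0 j, d i + ∑ i ∈ Ioc j l, d i = ∑ i ∈ Ioc 0 l, d i :=
      Finset.sum_Ioc_consecutive _ (Nat.zero_le j) hjl
    have e1 : Icc 1 j = Ioc 0 j := by rw [← Finset.Icc_add_one_left_eq_Ioc, zero_add]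
    have e2 : Icc 1 l = Ioc 0 l := by rw [← Finset.Icc_add_one_left_eq_Ioc, zero_add]
    have e3 : Icc (j+1) l = Ioc j l := by rw [← Finset.Icc_add_one_left_eq_Ioc]
    simp only [hX, e1, e2, e3]
    linarith
  -- log-sums of products
  have hlogS : ∀ a b : ℕ, 1 ≤ a → b ≤ n →
      Real.log (∏ i ∈ Icc a b, S i) = ∑ i ∈ Icc a b, Real.log (S i) := by
    intro a b ha hb
    apply Real.log_prod
    intro i hi
    simp only [Finset.mem_Icc] at hi
    exact ne_of_gt (hS i (le_trans ha hi.1) (le_trans hi.2 hb))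
  have hlogR : ∀ a b : ℕ, 1 ≤ a → b ≤ n →
      Real.log (∏ i ∈ Icc a b, R i) = ∑ i ∈ Icc a b, Real.log (R i) := by
    intro a b ha hb
    apply Real.log_prod
    intro i hi
    simp only [Finset.mem_Icc] at hi
    exact ne_of_gt (hR i (le_trans ha hi.1) (le_trans hi.2 hb))
  -- the chord hypothesis
  have hc : ∀ j l, j < k → k ≤ l → l ≤ n →
      X j + (((k : ℝ) - (j : ℝ)) / ((l : ℝ) - (j : ℝ))) * (X l - X j) ≤ 0 := by
    intro j l hjk hkl hln
    have hIn' := hIn j l hjk hkl hln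
    have hjl : j ≤ l := le_trans (le_of_lt hjk) hkl
    set c : ℝ := ((k : ℝ) - (j : ℝ)) / ((l : ℝ) - (j : ℝ)) with hcdef
    have hSual : (0:ℝ) < ∏ i ∈ Icc (j+1) l, S i := hprodSpos (j+1) l (by omega) hln
    have hRual : (0:ℝ) < ∏ i ∈ Icc (j+1) l, R i := hprodRpos (j+1) l (by omega) hln
    have hS1j : (0:ℝ) < ∏ i ∈ Icc 1 j, S i := hprodSpos 1 j (le_refl 1) (by omega)
    have hR1j : (0:ℝ) < ∏ i ∈ Icc 1 j, R i := hprodRpos 1 j (by omega) (by omega)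
    have hLpos : (0:ℝ) < (∏ i ∈ Icc 1 j, S i) * (∏ i ∈ Icc (j+1) l, S i) ^ c :=
      mul_pos hS1j (Real.rpow_pos_of_pos hSual c)
    have hlog := Real.log_le_log hLpos hIn'
    rw [Real.log_mul (ne_of_gt hS1j) (ne_of_gt (Real.rpow_pos_of_pos hSual c)),
        Real.log_mul (ne_of_gt hR1j) (ne_of_gt (Real.rpow_pos_of_pos hRual c)),
        Real.log_rpow hSual, Real.log_rpow hRual,
        hlogS 1 j (le_refl 1) (by omega), hlogR 1 j (le_refl 1) (by omega),
        hlogS (j+1) l (by omega) hln, hlogR (j+1) l (by omega) hln] at hlog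
    have hXj : X j = ∑ i ∈ Icc 1 j, Real.log (S i) - ∑ i ∈ Icc 1 j, Real.log (R i) := by
      simp only [hX, hd, Finset.sum_sub_distrib]
    have hXdl : X l - X j
        = ∑ i ∈ Icc (j+1) l, Real.log (S i) - ∑ i ∈ Icc (j+1) l, Real.log (R i) := by
      rw [hXdiff j l hjl]
      simp only [hd, Finset.sum_sub_distrib]
    rw [hXdl, hXj]
    have hring : c * (∑ i ∈ Icc (j + 1) l, Real.log (S i) - ∑ i ∈ Icc (j + 1) l, Real.log (R i))
        = c * ∑ i ∈ Icc (j + 1) l, Real.log (S i) - c * ∑ i ∈ Icc (j + 1) l, Real.log (R i) := by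
      ring
    linarith [hlog, hring]
  obtain ⟨hanti, hpre, hklezero⟩ := core n k X hk hkn hX0 hc
  refine ⟨fun i => R i * Real.exp (xFn n X i), ?_, ?_, ?_⟩
  · intro i h1 h2
    exact mul_pos (hR i h1 h2) (Real.exp_pos _)
  · intro p hp1 hpn
    have e1 : Icc 1 p = Ioc 0 p := by rw [← Finset.Icc_add_one_left_eq_Ioc, zero_add]
    have hprod : ∏ i ∈ Icc 1 p, R i * Real.exp (xFn n X i)
        = (∏ i ∈ Icc 1 p, R i) * Real.exp (∑ i ∈ Icc 1 p, xFn n X i) := by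
      rw [Finset.prod_mul_distrib, Real.exp_sum]
    have hSeq : ∏ i ∈ Icc 1 p, S i = (∏ i ∈ Icc 1 p, R i) * Real.exp (X p) := by
      have : Real.exp (X p) = ∏ i ∈ Icc 1 p, (S i / R i) := by
        rw [hX]
        rw [Real.exp_sum]
        apply Finset.prod_congr rfl
        intro i hi
        simp only [Finset.mem_Icc] at hi
        rw [hd]
        rw [Real.exp_sub, Real.exp_log (hS i hi.1 (le_trans hi.2 hpn)),
          Real.exp_log (hR i hi.1 (le_trans hi.2 hpn))]
      rw [this, ← Finset.prod_mul_distrib]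
      apply Finset.prod_congr rfl
      intro i hi
      simp only [Finset.mem_Icc] at hi
      have hne : R i ≠ 0 := ne_of_gt (hR i hi.1 (le_trans hi.2 hpn))
      rw [mul_div_assoc', mul_div_cancel_left₀ _ hne]
    rw [hprod, hSeq]
    apply mul_le_mul_of_nonneg_left _ (le_of_lt (hprodRpos 1 p (le_refl 1) hpn))
    apply Real.exp_le_exp.mpr
    rw [e1]
    exact hpre p hpn
  · intro A hA hcard
    have hTR : ∏ i ∈ A, (R i * Real.exp (xFn n X i) / R i) = Real.exp (∑ i ∈ A, xFn n X i) := by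
      rw [Real.exp_sum]
      apply Finset.prod_congr rfl
      intro i hi
      have hi' := hA hi
      simp only [Finset.mem_Icc] at hi'
      have : R i ≠ 0 := ne_of_gt (hR i hi'.1 hi'.2)
      field_simp
    rw [hTR, ← Real.exp_zero]
    apply Real.exp_le_exp.mpr
    have h1 := aux_subset_sum n (xFn n X) hanti k A hA hcard
    have e1 : Icc 1 k = Ioc 0 k := by rw [← Finset.Icc_add_one_left_eq_Ioc, zero_add]
    rw [e1] at h1
    linarith
end
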